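/- Let n ≥ 0 be an integer and let q⁺ and q⁻ be homogeneous polynomials of degree n+2 in two real variables with complex coefficients such that Δ²q⁺ = 0 and Δ²q⁻ = 0 (each is biharmonic, equivalently each Laplacian Δq^± is a harmonic polynomial). Suppose: q⁺(0,t) = q⁻(0,t) and ∂q⁺/∂x₁(0,t) = ∂q⁻/∂x₁(0,t) for all t ∈ [0,R]; q⁺(s,0) = 0 and ∂q⁺/∂x₂(s,0) = 0 for all s ∈ [−R,0]; q⁻(s,0) = 0 and ∂q⁻/∂x₂(s,0) = 0 for all s ∈ [0,R]. Then q⁺ = q⁻ as polynomials, and consequently Δq⁺ = Δq⁻. -/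

import Mathlib

open MvPolynomial Set

/-- The Laplacian ∂²/∂x₁² + ∂²/∂x₂² on polynomials in two variables. -/
noncomputable def lapP (q : MvPolynomial (Fin 2) ℂ) : MvPolynomial (Fin 2) ℂ :=
  pderiv 0 (pderiv 0 q) + pderiv 1 (pderiv 1 q)

/-- Evaluation of a two-variable complex polynomial at a real point. -/
noncomputable def evalAt (q : MvPolynomial (Fin 2) ℂ) (x y : ℝ) : ℂ :=
  eval ![(x : ℂ), (y : ℂ)] q

lemma coeff_pderiv' {σ : Type*} [DecidableEq σ] (i : σ) (d : σ →₀ ℕ) (f : MvPolynomial σ ℂ) :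
    coeff d (pderiv i f) = ((d i : ℂ) + 1) * coeff (d + Finsupp.single i 1) f := by
  induction f using MvPolynomial.induction_on' with
  | monomial s a =>
    rw [pderiv_monomial, coeff_monomial, coeff_monomial]
    by_cases hs : s i = 0
    · have h1 : s - Finsupp.single i 1 = s := by
        ext j; by_cases hj : j = i
        · subst hj; simp [Finsupp.single_apply, hs]
        · simp [Finsupp.single_apply, Ne.symm hj]
      have h2 : s ≠ d + Finsupp.single i 1 := by
        intro h; apply absurd hs; rw [h]; simp
      rw [h1, if_neg h2]
      by_cases hsd : s = d
      · subst hsd; simp [hs]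
      · simp [hsd]
    · by_cases hsd : s - Finsupp.single i 1 = d
      · have hs' : s = d + Finsupp.single i 1 := by
          rw [← hsd]; ext j; by_cases hj : j = i
          · subst hj; simp [Finsupp.single_apply]; omega
          · simp [Finsupp.single_apply, Ne.symm hj]
        rw [if_pos hsd, if_pos hs']
        have : s i = d i + 1 := by rw [hs']; simp
        rw [this]; push_cast; ring
      · have hs' : s ≠ d + Finsupp.single i 1 := by
          intro h; apply hsd; rw [h]; ext j; by_cases hj : j = i
          · subst hj; simp [Finsupp.single_apply]
          · simp [Finsupp.single_apply, Ne.symm hj]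
        rw [if_neg hsd, if_neg hs', mul_zero]
  | add p q hp hq => simp only [map_add, coeff_add, hp, hq]; ring

lemma coeff_lapP (f : MvPolynomial (Fin 2) ℂ) (e : Fin 2 →₀ ℕ) :
    coeff e (lapP f) = ((e 0 : ℂ)+1)*((e 0 : ℂ)+2) * coeff (e + Finsupp.single 0 2) f
      + ((e 1 : ℂ)+1)*((e 1 : ℂ)+2) * coeff (e + Finsupp.single 1 2) f := by
  simp only [lapP, coeff_add, coeff_pderiv']
  have h0 : ((e + Finsupp.single (0 : Fin 2) 1 : Fin 2 →₀ ℕ)) 0 = e 0 + 1 := by simp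
  have h1 : ((e + Finsupp.single (1 : Fin 2) 1 : Fin 2 →₀ ℕ)) 1 = e 1 + 1 := by simp
  have g0 : e + Finsupp.single (0 : Fin 2) 1 + Finsupp.single 0 1
      = e + Finsupp.single 0 2 := by
    rw [add_assoc, ← Finsupp.single_add]
  have g1 : e + Finsupp.single (1 : Fin 2) 1 + Finsupp.single 1 1
      = e + Finsupp.single 1 2 := by
    rw [add_assoc, ← Finsupp.single_add]
  rw [h0, h1, g0, g1]
  push_cast
  ring

def Hom2 (f : MvPolynomial (Fin 2) ℂ) (m : ℕ) : Prop :=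
  ∀ d : Fin 2 →₀ ℕ, coeff d f ≠ 0 → d 0 + d 1 = m

lemma hom2_of_isHomogeneous {f : MvPolynomial (Fin 2) ℂ} {m : ℕ}
    (hf : f.IsHomogeneous m) : Hom2 f m := by
  intro d hd
  have h := hf hd
  rw [← h]
  simp [Finsupp.weight, Finsupp.linearCombination, Finsupp.sum]
  rw [Finset.sum_subset (Finset.subset_univ d.support)]
  · exact (Fin.sum_univ_two d).symm
  · intro x _ hx
    simpa using Finsupp.notMem_support_iff.mp hx

lemma fin2_eq_single_add_single (d : Fin 2 →₀ ℕ) :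
    d = Finsupp.single 0 (d 0) + Finsupp.single 1 (d 1) := by
  ext j
  fin_cases j <;> simp [Finsupp.single_apply]

lemma hom2_pderiv {f : MvPolynomial (Fin 2) ℂ} {m : ℕ} (i : Fin 2)
    (hf : Hom2 f (m + 1)) : Hom2 (pderiv i f) m := by
  intro d hd
  rw [coeff_pderiv'] at hd
  have h2 : coeff (d + Finsupp.single i 1) f ≠ 0 := by
    intro h; rw [h, mul_zero] at hd; exact hd rfl
  have h3 := hf _ h2
  fin_cases i <;> simp [Finsupp.single_apply] at h3 <;> omega

lemma eval_x0 {f : MvPolynomial (Fin 2) ℂ} {m : ℕ} (hf : Hom2 f m) (s : ℂ) :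
    eval ![s, 0] f = coeff (Finsupp.single 0 m) f * s ^ m := by
  rw [eval_eq']
  rw [Finset.sum_eq_single (Finsupp.single (0 : Fin 2) m)]
  · simp [Fin.prod_univ_two, Finsupp.single_apply]
  · intro d hd hne
    have hc : coeff d f ≠ 0 := MvPolynomial.mem_support_iff.mp hd
    have hsum := hf d hc
    by_cases h1 : d 1 = 0
    · exfalso; apply hne
      have h0 : d 0 = m := by omega
      rw [fin2_eq_single_add_single d, h0, h1]; simp
    · rw [Fin.prod_univ_two]
      simp [zero_pow h1]
  · intro h
    rw [MvPolynomial.notMem_support_iff.mp h, zero_mul]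

lemma eval_0y {f : MvPolynomial (Fin 2) ℂ} {m : ℕ} (hf : Hom2 f m) (t : ℂ) :
    eval ![0, t] f = coeff (Finsupp.single 1 m) f * t ^ m := by
  rw [eval_eq']
  rw [Finset.sum_eq_single (Finsupp.single (1 : Fin 2) m)]
  · simp [Fin.prod_univ_two, Finsupp.single_apply]
  · intro d hd hne
    have hc : coeff d f ≠ 0 := MvPolynomial.mem_support_iff.mp hd
    have hsum := hf d hc
    by_cases h0 : d 0 = 0
    · exfalso; apply hne
      have h1 : d 1 = m := by omega
      rw [fin2_eq_single_add_single d, h0, h1]; simp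
    · rw [Fin.prod_univ_two]
      simp [zero_pow h0]
  · intro h
    rw [MvPolynomial.notMem_support_iff.mp h, zero_mul]

noncomputable def bseq (m p : ℕ) : ℕ → ℝ
  | 0 => 0
  | 1 => 1
  | i + 2 =>
    (((2*(p+2*i+1)*(p+2*i+2)*(m-(p+2*i)-3)*(m-(p+2*i)-2) : ℕ) : ℝ) * bseq m p (i+1)
      - (((m-(p+2*i)-3)*(m-(p+2*i)-2)*(m-(p+2*i)-1)*(m-(p+2*i)) : ℕ) : ℝ) * bseq m p i)
    / (((p+2*i+1)*(p+2*i+2)*(p+2*i+3)*(p+2*i+4) : ℕ) : ℝ)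

lemma bseq_pos (m p : ℕ) : ∀ i : ℕ, p + 2*i + 2 ≤ m →
    0 < bseq m p (i+1) ∧
    (((m-(p+2*i)) * (m-(p+2*i)-1) : ℕ) : ℝ) * bseq m p i
      ≤ (((p+2*i+1)*(p+2*i+2) : ℕ) : ℝ) * bseq m p (i+1) := by
  intro i
  induction i with
  | zero =>
    intro _
    refine ⟨by simp [bseq], ?_⟩
    simp [bseq]
    positivity
  | succ i ih =>
    intro hle
    have hle' : p + 2*i + 2 ≤ m := by omega
    obtain ⟨hb1, hineq⟩ := ih hle'
    obtain ⟨K, hK⟩ : ∃ K, m = p + 2*i + 4 + K := ⟨m - (p+2*i+4), by omega⟩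
    have e1 : m - (p + 2*i) - 3 = K+1 := by omega
    have e2 : m - (p + 2*i) - 2 = K+2 := by omega
    have e3 : m - (p + 2*i) - 1 = K+3 := by omega
    have e4 : m - (p + 2*i) = K+4 := by omega
    have f1 : m - (p + 2*(i+1)) = K+2 := by omega
    have f2 : m - (p + 2*(i+1)) - 1 = K+1 := by omega
    have g1 : p + 2*(i+1) + 1 = p + 2*i + 3 := by omega
    have g2 : p + 2*(i+1) + 2 = p + 2*i + 4 := by omega
    have hbs : bseq m p (i+2) =
        (((2*(p+2*i+1)*(p+2*i+2)*(K+1)*(K+2) : ℕ) : ℝ) * bseq m p (i+1)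
          - (((K+1)*(K+2)*(K+3)*(K+4) : ℕ) : ℝ) * bseq m p i)
        / (((p+2*i+1)*(p+2*i+2)*(p+2*i+3)*(p+2*i+4) : ℕ) : ℝ) := by
      rw [show bseq m p (i+2) =
        (((2*(p+2*i+1)*(p+2*i+2)*(m-(p+2*i)-3)*(m-(p+2*i)-2) : ℕ) : ℝ) * bseq m p (i+1)
          - (((m-(p+2*i)-3)*(m-(p+2*i)-2)*(m-(p+2*i)-1)*(m-(p+2*i)) : ℕ) : ℝ) * bseq m p i)
        / (((p+2*i+1)*(p+2*i+2)*(p+2*i+3)*(p+2*i+4) : ℕ) : ℝ) from rfl, e1, e2, e3, e4]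
    rw [e3, e4] at hineq
    rw [show i+1+1 = i+2 from rfl, f2, f1, g1, g2]
    set b0 := bseq m p i
    set b1 := bseq m p (i+1)
    set b2 := bseq m p (i+2)
    push_cast at hineq hbs ⊢
    generalize hjj : (p:ℝ) + 2*(i:ℝ) = j at hineq hbs ⊢
    generalize hkk : (K:ℝ) = k at hineq hbs ⊢
    have hj0 : (0:ℝ) ≤ j := by rw [← hjj]; positivity
    have hk0 : (0:ℝ) ≤ k := by rw [← hkk]; positivity
    have hD : (0:ℝ) < (j+1)*(j+2)*(j+3)*(j+4) := by positivity
    have hα : (k+1)*(k+2)*(k+3)*(k+4) * b0 ≤ (k+1)*(k+2)*((j+1)*(j+2)) * b1 := by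
      nlinarith [mul_le_mul_of_nonneg_left hineq (by positivity : (0:ℝ) ≤ (k+1)*(k+2))]
    have hNge : ((j+1)*(j+2)*((k+1)*(k+2))) * b1
        ≤ 2*(j+1)*(j+2)*(k+1)*(k+2)*b1 - (k+1)*(k+2)*(k+3)*(k+4)*b0 := by
      linarith [hα]
    have hprodpos : (0:ℝ) < ((j+1)*(j+2)*((k+1)*(k+2))) * b1 :=
      mul_pos (by positivity) hb1
    have hNpos : (0:ℝ) < 2*(j+1)*(j+2)*(k+1)*(k+2)*b1 - (k+1)*(k+2)*(k+3)*(k+4)*b0 := by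
      linarith
    constructor
    · rw [hbs]; exact div_pos hNpos hD
    · have h2 : ((j+1)*(j+2)) * ((j+3)*(j+4)*b2)
          = 2*(j+1)*(j+2)*(k+1)*(k+2)*b1 - (k+1)*(k+2)*(k+3)*(k+4)*b0 := by
        rw [hbs]
        field_simp
      have hGoal : ((j+1)*(j+2)) * ((k+2)*(k+1)*b1) ≤ ((j+1)*(j+2)) * ((j+3)*(j+4)*b2) := by
        rw [h2]; linarith [hNge]
      have h3 := le_of_mul_le_mul_left hGoal (show (0:ℝ) < (j+1)*(j+2) by positivity)
      linarith [h3]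

lemma bseq_step (m p i K : ℕ) (hK : m = p + 2*i + 4 + K) :
    bseq m p (i+2) * (((p+2*i+1)*(p+2*i+2)*(p+2*i+3)*(p+2*i+4) : ℕ) : ℝ)
      = ((2*(p+2*i+1)*(p+2*i+2)*(K+1)*(K+2) : ℕ) : ℝ) * bseq m p (i+1)
        - (((K+1)*(K+2)*(K+3)*(K+4) : ℕ) : ℝ) * bseq m p i := by
  have e1 : m - (p + 2*i) - 3 = K+1 := by omega
  have e2 : m - (p + 2*i) - 2 = K+2 := by omega
  have e3 : m - (p + 2*i) - 1 = K+3 := by omega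
  have e4 : m - (p + 2*i) = K+4 := by omega
  have hA : ((((p+2*i+1)*(p+2*i+2)*(p+2*i+3)*(p+2*i+4) : ℕ)) : ℝ) ≠ 0 := by
    rw [Nat.cast_ne_zero]; positivity
  rw [show bseq m p (i+2) =
    (((2*(p+2*i+1)*(p+2*i+2)*(m-(p+2*i)-3)*(m-(p+2*i)-2) : ℕ) : ℝ) * bseq m p (i+1)
      - (((m-(p+2*i)-3)*(m-(p+2*i)-2)*(m-(p+2*i)-1)*(m-(p+2*i)) : ℕ) : ℝ) * bseq m p i)
    / (((p+2*i+1)*(p+2*i+2)*(p+2*i+3)*(p+2*i+4) : ℕ) : ℝ) from rfl,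
    e1, e2, e3, e4, div_mul_cancel₀ _ hA]

lemma crel (m p : ℕ) (c : ℕ → ℂ) (hcp : c p = 0)
    (hrec : ∀ j k, j + k + 4 = m →
      ((((j+1)*(j+2)*(j+3)*(j+4) : ℕ)) : ℂ) * c (j+4)
      + (((2*(j+1)*(j+2)*(k+1)*(k+2) : ℕ)) : ℂ) * c (j+2)
      + ((((k+1)*(k+2)*(k+3)*(k+4) : ℕ)) : ℂ) * c j = 0) :
    ∀ i, p + 2*i ≤ m →
      c (p + 2*i) = ((((-1:ℝ)^(i+1) * bseq m p i : ℝ)) : ℂ) * c (p+2) := by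
  have key : ∀ i, (p + 2*i ≤ m →
      c (p + 2*i) = ((((-1:ℝ)^(i+1) * bseq m p i : ℝ)) : ℂ) * c (p+2)) ∧
      (p + 2*(i+1) ≤ m →
      c (p + 2*(i+1)) = ((((-1:ℝ)^(i+2) * bseq m p (i+1) : ℝ)) : ℂ) * c (p+2)) := by
    intro i
    induction i with
    | zero =>
      constructor
      · intro _; simp [bseq, hcp]
      · intro _; norm_num [bseq]
    | succ i ih =>
      refine ⟨ih.2, ?_⟩
      intro h
      obtain ⟨K, hK⟩ : ∃ K, m = p + 2*i + 4 + K := ⟨m - (p+2*i+4), by omega⟩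
      have h1 := ih.1 (by omega)
      have h2 := ih.2 (by omega)
      have hr := hrec (p + 2*i) K (by omega)
      have hb := bseq_step m p i K hK
      have hbC := congrArg (Complex.ofReal) hb
      push_cast at hbC h1 h2 ⊢
      have hA : ((((p+2*i+1)*(p+2*i+2)*(p+2*i+3)*(p+2*i+4) : ℕ)) : ℂ) ≠ 0 := by
        rw [Nat.cast_ne_zero]; positivity
      push_cast at hA
      rw [show p + 2*(i+1+1) = p + 2*i + 4 by omega]
      rw [show p + 2*(i+1) = p + 2*i + 2 by omega] at h2
      apply mul_left_cancel₀ hA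
      push_cast at hr
      rw [show p + 2*i + 2 + 2 = p + 2*i + 4 by omega]
      linear_combination hr - ((2*((p:ℂ)+2*i+1)*((p:ℂ)+2*i+2)*((K:ℂ)+1)*((K:ℂ)+2))) * h2
        - ((((K:ℂ)+1)*((K:ℂ)+2)*((K:ℂ)+3)*((K:ℂ)+4))) * h1
        + (-1:ℂ)^i * c (p+2) * hbC
  exact fun i => (key i).1

lemma chain_all_zero (m : ℕ) (c : ℕ → ℂ)
    (hc0 : c 0 = 0) (hc1 : c 1 = 0) (hcm : c m = 0) (hcm1 : ∀ a, a + 1 = m → c a = 0)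
    (hrec : ∀ j k, j + k + 4 = m →
      ((((j+1)*(j+2)*(j+3)*(j+4) : ℕ)) : ℂ) * c (j+4)
      + (((2*(j+1)*(j+2)*(k+1)*(k+2) : ℕ)) : ℂ) * c (j+2)
      + ((((k+1)*(k+2)*(k+3)*(k+4) : ℕ)) : ℂ) * c j = 0) :
    ∀ a, a ≤ m → c a = 0 := by
  intro a ha
  by_cases h01 : a = 0
  · rw [h01]; exact hc0
  by_cases h11 : a = 1
  · rw [h11]; exact hc1
  by_cases hm : a = m
  · rw [hm]; exact hcm
  by_cases hm1 : a + 1 = m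
  · exact hcm1 a hm1
  have h2a : 2 ≤ a := by omega
  have ham : a + 2 ≤ m := by omega
  set p := a % 2 with hp
  have hcp : c p = 0 := by
    rcases Nat.mod_two_eq_zero_or_one a with h | h
    · rw [hp, h]; exact hc0
    · rw [hp, h]; exact hc1
  have hrel := crel m p c hcp hrec
  obtain ⟨iL, hiL1, hiL2, hiL3⟩ :
      ∃ iL, p + 2*iL ≤ m ∧ m ≤ p + 2*iL + 1 ∧ 1 ≤ iL := ⟨(m - p)/2, by omega⟩
  have hb : 0 < bseq m p iL := by
    have := (bseq_pos m p (iL - 1) (by omega)).1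
    rwa [show iL - 1 + 1 = iL by omega] at this
  have hX : ((((-1:ℝ)^(iL+1) * bseq m p iL : ℝ)) : ℂ) ≠ 0 := by
    rw [Complex.ofReal_ne_zero]
    exact mul_ne_zero (pow_ne_zero _ (by norm_num)) (ne_of_gt hb)
  have hcL : c (p + 2*iL) = 0 := by
    have hor : p + 2*iL = m ∨ p + 2*iL + 1 = m := by omega
    rcases hor with h | h
    · rw [h]; exact hcm
    · exact hcm1 _ h
  have hcp2 : c (p + 2) = 0 := by
    have h := hrel iL hiL1
    rw [hcL] at h
    exact ((mul_eq_zero.mp h.symm).resolve_left hX)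
  have haa : a = p + 2*(a/2) := by omega
  rw [haa, hrel (a/2) (by omega), hcp2, mul_zero]

lemma evalAt_0y {f : MvPolynomial (Fin 2) ℂ} {m : ℕ} (hf : Hom2 f m) (t : ℝ) :
    evalAt f 0 t = coeff (Finsupp.single 1 m) f * (t:ℂ)^m := by
  unfold evalAt
  rw [Complex.ofReal_zero]
  exact eval_0y hf _

lemma evalAt_x0 {f : MvPolynomial (Fin 2) ℂ} {m : ℕ} (hf : Hom2 f m) (s : ℝ) :
    evalAt f s 0 = coeff (Finsupp.single 0 m) f * (s:ℂ)^m := by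
  unfold evalAt
  rw [Complex.ofReal_zero]
  exact eval_x0 hf _

lemma lapP_sub (a b : MvPolynomial (Fin 2) ℂ) : lapP (a - b) = lapP a - lapP b := by
  simp only [lapP, map_sub]
  ring

theorem stmt_7 (R : ℝ) (hR : 0 < R) (n : ℕ)
    (qp qm : MvPolynomial (Fin 2) ℂ)
    (hqp : qp.IsHomogeneous (n + 2)) (hqm : qm.IsHomogeneous (n + 2))
    (hbiharmP : lapP (lapP qp) = 0) (hbiharmM : lapP (lapP qm) = 0)
    (htrans : ∀ t ∈ Set.Icc (0 : ℝ) R,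
      evalAt qp 0 t = evalAt qm 0 t ∧
      evalAt (pderiv 0 qp) 0 t = evalAt (pderiv 0 qm) 0 t)
    (hbp : ∀ s ∈ Set.Icc (-R) (0 : ℝ),
      evalAt qp s 0 = 0 ∧ evalAt (pderiv 1 qp) s 0 = 0)
    (hbm : ∀ s ∈ Set.Icc (0 : ℝ) R,
      evalAt qm s 0 = 0 ∧ evalAt (pderiv 1 qm) s 0 = 0) :
    qp = qm ∧ lapP qp = lapP qm := by
  have hqp2 : Hom2 qp (n+2) := hom2_of_isHomogeneous hqp
  have hqm2 : Hom2 qm (n+2) := hom2_of_isHomogeneous hqm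
  have hd2 : Hom2 (qp - qm) (n+2) := hom2_of_isHomogeneous (hqp.sub hqm)
  have hRC : (R : ℂ) ≠ 0 := Complex.ofReal_ne_zero.mpr (ne_of_gt hR)
  have hRmem : R ∈ Set.Icc (0:ℝ) R := ⟨hR.le, le_refl R⟩
  have hRmem' : -R ∈ Set.Icc (-R) (0:ℝ) := ⟨le_refl _, by linarith⟩
  have hnRC : ((-R : ℝ) : ℂ) ≠ 0 := Complex.ofReal_ne_zero.mpr (by linarith)
  -- the coefficient sequence of the difference
  have hall : ∀ a, a ≤ n + 2 →
      coeff (Finsupp.single 0 a + Finsupp.single 1 (n+2-a)) (qp - qm) = 0 := by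
    apply chain_all_zero (n+2)
      (fun a => coeff (Finsupp.single 0 a + Finsupp.single 1 (n+2-a)) (qp - qm))
    -- c 0 = 0
    · have h := (htrans R hRmem).1
      rw [evalAt_0y hqp2, evalAt_0y hqm2] at h
      have h2 := mul_right_cancel₀ (pow_ne_zero _ hRC) h
      simp only [Nat.sub_zero, Finsupp.single_zero, zero_add, coeff_sub]
      rw [h2, sub_self]
    -- c 1 = 0
    · have h := (htrans R hRmem).2
      rw [evalAt_0y (hom2_pderiv 0 hqp2), evalAt_0y (hom2_pderiv 0 hqm2)] at h
      have h2 := mul_right_cancel₀ (pow_ne_zero _ hRC) h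
      rw [coeff_pderiv', coeff_pderiv'] at h2
      have hz : ((Finsupp.single (1 : Fin 2) (n+1) : Fin 2 →₀ ℕ)) 0 = 0 := by
        simp [Finsupp.single_apply]
      rw [hz] at h2
      rw [Nat.cast_zero, zero_add, one_mul] at h2
      have hidx : Finsupp.single (0 : Fin 2) 1 + Finsupp.single 1 (n+2-1)
          = Finsupp.single (1 : Fin 2) (n+1) + Finsupp.single 0 1 := by
        rw [show n+2-1 = n+1 by omega, add_comm]
      rw [hidx, coeff_sub, h2]
      ring
    -- c m = 0
    · have hp := (hbp (-R) hRmem').1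
      have hm := (hbm R hRmem).1
      rw [evalAt_x0 hqp2] at hp
      rw [evalAt_x0 hqm2] at hm
      have hp2 : coeff (Finsupp.single 0 (n+2)) qp = 0 :=
        (mul_eq_zero.mp hp).resolve_right (pow_ne_zero _ hnRC)
      have hm2 : coeff (Finsupp.single 0 (n+2)) qm = 0 :=
        (mul_eq_zero.mp hm).resolve_right (pow_ne_zero _ hRC)
      simp only [Nat.sub_self, Finsupp.single_zero, add_zero, coeff_sub]
      rw [hp2, hm2, sub_self]
    -- c (m-1) = 0
    · intro a hh
      have haa : a = n + 1 := by omega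
      subst haa
      have hp := (hbp (-R) hRmem').2
      have hm := (hbm R hRmem).2
      rw [evalAt_x0 (hom2_pderiv 1 hqp2)] at hp
      rw [evalAt_x0 (hom2_pderiv 1 hqm2)] at hm
      have hp2 : coeff (Finsupp.single 0 (n+1)) (pderiv 1 qp) = 0 :=
        (mul_eq_zero.mp hp).resolve_right (pow_ne_zero _ hnRC)
      have hm2 : coeff (Finsupp.single 0 (n+1)) (pderiv 1 qm) = 0 :=
        (mul_eq_zero.mp hm).resolve_right (pow_ne_zero _ hRC)
      rw [coeff_pderiv'] at hp2 hm2
      have hz : ((Finsupp.single (0 : Fin 2) (n+1) : Fin 2 →₀ ℕ)) 1 = 0 := by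
        simp [Finsupp.single_apply]
      rw [hz] at hp2 hm2
      rw [Nat.cast_zero, zero_add, one_mul] at hp2
      rw [Nat.cast_zero, zero_add, one_mul] at hm2
      rw [show n+2-(n+1) = 1 by omega, coeff_sub, hp2, hm2, sub_self]
    -- recurrence
    · intro j k hjk
      have hlap : lapP (lapP (qp - qm)) = 0 := by
        rw [lapP_sub, lapP_sub, hbiharmP, hbiharmM, sub_self]
      have h0 := congrArg (coeff (Finsupp.single 0 j + Finsupp.single 1 k)) hlap
      rw [MvPolynomial.coeff_zero] at h0
      rw [coeff_lapP, coeff_lapP, coeff_lapP] at h0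
      have i1 : Finsupp.single (0:Fin 2) j + Finsupp.single 1 k + Finsupp.single 0 2
          + Finsupp.single 0 2 = Finsupp.single (0:Fin 2) (j+4) + Finsupp.single 1 k := by
        ext l; fin_cases l <;> simp [Finsupp.single_apply] <;> omega
      have i2 : Finsupp.single (0:Fin 2) j + Finsupp.single 1 k + Finsupp.single 0 2
          + Finsupp.single 1 2 = Finsupp.single (0:Fin 2) (j+2) + Finsupp.single 1 (k+2) := by
        ext l; fin_cases l <;> simp [Finsupp.single_apply] <;> omega
      have i3 : Finsupp.single (0:Fin 2) j + Finsupp.single 1 k + Finsupp.single 1 2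
          + Finsupp.single 0 2 = Finsupp.single (0:Fin 2) (j+2) + Finsupp.single 1 (k+2) := by
        ext l; fin_cases l <;> simp [Finsupp.single_apply] <;> omega
      have i4 : Finsupp.single (0:Fin 2) j + Finsupp.single 1 k + Finsupp.single 1 2
          + Finsupp.single 1 2 = Finsupp.single (0:Fin 2) j + Finsupp.single 1 (k+4) := by
        ext l; fin_cases l <;> simp [Finsupp.single_apply] <;> omega
      rw [i1, i2, i3, i4] at h0
      have a0 : ((Finsupp.single (0:Fin 2) j + Finsupp.single 1 k : Fin 2 →₀ ℕ)) 0 = j := by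
        simp [Finsupp.single_apply]
      have a1 : ((Finsupp.single (0:Fin 2) j + Finsupp.single 1 k : Fin 2 →₀ ℕ)) 1 = k := by
        simp [Finsupp.single_apply]
      have b0 : ((Finsupp.single (0:Fin 2) j + Finsupp.single 1 k + Finsupp.single 0 2
          : Fin 2 →₀ ℕ)) 0 = j + 2 := by simp [Finsupp.single_apply]
      have b1 : ((Finsupp.single (0:Fin 2) j + Finsupp.single 1 k + Finsupp.single 0 2
          : Fin 2 →₀ ℕ)) 1 = k := by simp [Finsupp.single_apply]
      have d0 : ((Finsupp.single (0:Fin 2) j + Finsupp.single 1 k + Finsupp.single 1 2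
          : Fin 2 →₀ ℕ)) 0 = j := by simp [Finsupp.single_apply]
      have d1 : ((Finsupp.single (0:Fin 2) j + Finsupp.single 1 k + Finsupp.single 1 2
          : Fin 2 →₀ ℕ)) 1 = k + 2 := by simp [Finsupp.single_apply]
      rw [a0, a1, b0, b1, d0, d1] at h0
      rw [show n+2-(j+4) = k by omega, show n+2-(j+2) = k+2 by omega,
        show n+2-j = k+4 by omega]
      push_cast at h0 ⊢
      linear_combination h0
  -- conclude
  have hzero : qp - qm = 0 := by
    apply MvPolynomial.ext
    intro u
    rw [MvPolynomial.coeff_zero]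
    by_cases hdeg : u 0 + u 1 = n + 2
    · have hu : u = Finsupp.single 0 (u 0) + Finsupp.single 1 (u 1) :=
        fin2_eq_single_add_single u
      have h1 : u 1 = n + 2 - u 0 := by omega
      rw [hu, h1]
      exact hall (u 0) (by omega)
    · by_contra hne
      exact hdeg (hd2 u hne)
  have hqq : qp = qm := sub_eq_zero.mp hzero
  exact ⟨hqq, by rw [hqq]⟩
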